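/- Let G and C be n×n Hermitian complex matrices, let f₁ and f₂ be monotonically increasing real functions on ℝ, and set A = f₁(G) and B = f₂(G). Fix an index k and a real number a ≥ 0, and suppose that Σ_{j=1}^k λ_j↓(aA + B) ≤ Σ_{j=1}^k λ_j↓(aA + C). Then for every b with 0 ≤ b ≤ a, we also have Σ_{j=1}^k λ_j↓(bA + B) ≤ Σ_{j=1}^k λ_j↓(bA + C). -/

import Mathlib

open Matrix
open scoped ComplexOrder

/-- The eigenvalues of a square matrix, sorted in non-increasing order
(junk value `0` if the matrix is not Hermitian). -/
noncomputable def eigValsDown {𝕜 : Type*} [RCLike 𝕜] {n : ℕ}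
    (A : Matrix (Fin n) (Fin n) 𝕜) : Fin n → ℝ :=
  if hA : A.IsHermitian then
    fun k => (hA.eigenvalues ∘ Tuple.sort hA.eigenvalues) k.rev
  else 0

/-- Functional calculus: apply a real function to a Hermitian matrix via its spectral
decomposition (junk value `0` if the matrix is not Hermitian). -/
noncomputable def matFun {𝕜 : Type*} [RCLike 𝕜] {n : ℕ} (h : ℝ → ℝ)
    (A : Matrix (Fin n) (Fin n) 𝕜) : Matrix (Fin n) (Fin n) 𝕜 :=
  if hA : A.IsHermitian then
    (hA.eigenvectorUnitary : Matrix (Fin n) (Fin n) 𝕜) *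
      Matrix.diagonal (fun i => (h (hA.eigenvalues i) : 𝕜)) *
      star (hA.eigenvectorUnitary : Matrix (Fin n) (Fin n) 𝕜)
  else 0

/-- The operator norm (largest singular value) of a matrix. -/
noncomputable def opNorm {𝕜 : Type*} [RCLike 𝕜] {n : ℕ}
    (A : Matrix (Fin n) (Fin n) 𝕜) : ℝ :=
  ‖Matrix.toEuclideanCLM (𝕜 := 𝕜) A‖

/-- The matrix absolute value `|M| = (Mᴴ M)^(1/2)`. -/
noncomputable def matAbs {𝕜 : Type*} [RCLike 𝕜] {n : ℕ}
    (A : Matrix (Fin n) (Fin n) 𝕜) : Matrix (Fin n) (Fin n) 𝕜 :=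
  ((Matrix.posSemidef_conjTranspose_mul_self A).1.eigenvectorUnitary : Matrix (Fin n) (Fin n) 𝕜) *
    Matrix.diagonal ((↑) ∘ (√·) ∘ (Matrix.posSemidef_conjTranspose_mul_self A).1.eigenvalues) *
    (star (Matrix.posSemidef_conjTranspose_mul_self A).1.eigenvectorUnitary : Matrix (Fin n) (Fin n) 𝕜)

/-- The Ky Fan `k`-norm: the sum of the `k` largest singular values. -/
noncomputable def kyFanNorm {𝕜 : Type*} [RCLike 𝕜] {n : ℕ} (k : ℕ)
    (A : Matrix (Fin n) (Fin n) 𝕜) : ℝ :=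
  ∑ j ∈ Finset.univ.filter (fun j : Fin n => (j : ℕ) < k), eigValsDown (matAbs A) j

noncomputable def sortDown {n : ℕ} (c : Fin n → ℝ) : Fin n → ℝ :=
  fun j => (c ∘ Tuple.sort c) j.rev
lemma sortDown_antitone {n : ℕ} (c : Fin n → ℝ) : Antitone (sortDown c) := by
  intro i j hij
  exact Tuple.monotone_sort c (by simpa using Fin.rev_le_rev.mpr hij)
lemma sum_comp_sortDown {n : ℕ} (c : Fin n → ℝ) (F : ℝ → ℝ) :
    ∑ j, F (sortDown c j) = ∑ j, F (c j) := by
  have := Equiv.sum_comp ((Fin.revPerm).trans (Tuple.sort c)) (fun j => F (c j))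
  simpa [sortDown, Function.comp] using this
lemma sortDown_comp_mono {n : ℕ} (c : Fin n → ℝ) {g : ℝ → ℝ} (hg : Monotone g) :
    sortDown (g ∘ c) = g ∘ sortDown c := by
  have h1 : (g ∘ c) ∘ (Tuple.sort (g ∘ c)) = (g ∘ c) ∘ (Tuple.sort c) :=
    Tuple.unique_monotone (Tuple.monotone_sort (g ∘ c))
      (by
        have : (g ∘ c) ∘ (Tuple.sort c) = g ∘ (c ∘ Tuple.sort c) := rfl
        rw [this]
        exact hg.comp (Tuple.monotone_sort c))
  funext j
  have := congrFun h1 (Fin.rev j)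
  simpa [sortDown, Function.comp] using this
lemma filter_lt_min (n k : ℕ) :
    (Finset.univ.filter fun j : Fin n => (j : ℕ) < k) =
      Finset.univ.filter fun j : Fin n => (j : ℕ) < min k n := by
  ext j
  have := j.isLt
  simp only [Finset.mem_filter, Finset.mem_univ, true_and]
  omega
lemma card_filter_lt {n k : ℕ} (hk : k ≤ n) :
    ((Finset.univ : Finset (Fin n)).filter fun j : Fin n => (j : ℕ) < k).card = k := by
  have h : ((Finset.univ : Finset (Fin n)).filter fun j : Fin n => (j : ℕ) < k) =
      Finset.map (Fin.castLEEmb hk) Finset.univ := by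
    ext j
    simp only [Finset.mem_filter, Finset.mem_univ, true_and, Finset.mem_map,
      Fin.castLEEmb_apply]
    constructor
    · intro h; exact ⟨⟨(j : ℕ), h⟩, by ext; simp⟩
    · rintro ⟨i, rfl⟩; simpa using i.isLt
  rw [h, Finset.card_map, Finset.card_univ, Fintype.card_fin]
lemma abstract_bound {n k : ℕ} (hk : k ≤ n) (c d : Fin n → ℝ)
    (hd0 : ∀ j, 0 ≤ d j) (hd1 : ∀ j, d j ≤ 1) (hsum : ∑ j, d j = (k : ℝ)) :
    ∑ j, c j * d j ≤
      ∑ j ∈ Finset.univ.filter (fun j : Fin n => (j : ℕ) < k), sortDown c j := by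
  rcases Nat.eq_zero_or_pos k with rfl | hkpos
  · have hz : ∀ j ∈ (Finset.univ : Finset (Fin n)), d j = 0 :=
      (Finset.sum_eq_zero_iff_of_nonneg (fun j _ => hd0 j)).mp (by simpa using hsum)
    have h1 : ∑ j, c j * d j = 0 :=
      Finset.sum_eq_zero fun j hj => by rw [hz j hj, mul_zero]
    have h2 : (Finset.univ.filter (fun j : Fin n => (j : ℕ) < 0)) = ∅ := by simp
    rw [h1, h2]; simp
  · have hk1 : k - 1 < n := by omega
    set t := sortDown c ⟨k - 1, hk1⟩ with ht
    have step1 : ∀ j, c j * d j ≤ max (c j - t) 0 + t * d j := by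
      intro j
      have key : (c j - t) * d j ≤ max (c j - t) 0 := by
        rcases le_total (c j) t with h | h
        · exact le_trans (mul_nonpos_of_nonpos_of_nonneg (by linarith) (hd0 j))
            (le_max_right _ _)
        · calc (c j - t) * d j ≤ (c j - t) * 1 :=
                mul_le_mul_of_nonneg_left (hd1 j) (by linarith)
            _ ≤ max (c j - t) 0 := by rw [mul_one]; exact le_max_left _ _
      have e : c j * d j = (c j - t) * d j + t * d j := by ring
      rw [e]; linarith
    have hmaxsum : (∑ j, max (c j - t) 0) =
        ∑ j ∈ Finset.univ.filter (fun j : Fin n => (j : ℕ) < k), (sortDown c j - t) := by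
      rw [← sum_comp_sortDown c (fun x => max (x - t) 0)]
      rw [← Finset.sum_filter_add_sum_filter_not Finset.univ
        (fun j : Fin n => (j : ℕ) < k) (fun j => max (sortDown c j - t) 0)]
      have h1 : ∀ j ∈ Finset.univ.filter (fun j : Fin n => (j : ℕ) < k),
          max (sortDown c j - t) 0 = sortDown c j - t := by
        intro j hj
        have hjk : (j : ℕ) < k := (Finset.mem_filter.mp hj).2
        have hle : j ≤ (⟨k - 1, hk1⟩ : Fin n) := by
          rw [Fin.le_def]; simp; omega
        have := sortDown_antitone c hle
        exact max_eq_left (by rw [ht]; linarith)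
      have h2 : ∀ j ∈ Finset.univ.filter (fun j : Fin n => ¬ (j : ℕ) < k),
          max (sortDown c j - t) 0 = 0 := by
        intro j hj
        have hjk : ¬ (j : ℕ) < k := (Finset.mem_filter.mp hj).2
        have hle : (⟨k - 1, hk1⟩ : Fin n) ≤ j := by
          rw [Fin.le_def]; simp; omega
        have := sortDown_antitone c hle
        exact max_eq_right (by rw [ht]; linarith)
      rw [Finset.sum_congr rfl h1, Finset.sum_congr rfl h2, Finset.sum_const_zero, add_zero]
    calc ∑ j, c j * d j ≤ ∑ j, (max (c j - t) 0 + t * d j) :=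
          Finset.sum_le_sum fun j _ => step1 j
      _ = (∑ j, max (c j - t) 0) + t * (k : ℝ) := by
          rw [Finset.sum_add_distrib, ← Finset.mul_sum, hsum]
      _ = (∑ j ∈ Finset.univ.filter (fun j : Fin n => (j : ℕ) < k),
            (sortDown c j - t)) + t * k := by rw [hmaxsum]
      _ = ∑ j ∈ Finset.univ.filter (fun j : Fin n => (j : ℕ) < k), sortDown c j := by
          rw [Finset.sum_sub_distrib, Finset.sum_const, card_filter_lt hk,
            nsmul_eq_mul]
          ring
lemma main_bound {n : ℕ} {H U V : Matrix (Fin n) (Fin n) ℂ} {c : Fin n → ℝ}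
    (hU' : star U * U = 1) (hV' : star V * V = 1)
    (hH : H = U * Matrix.diagonal (fun i => (c i : ℂ)) * star U)
    (s : Finset (Fin n)) :
    ∑ i ∈ s, ((star V * H * V) i i).re ≤
      ∑ j ∈ Finset.univ.filter (fun j : Fin n => (j : ℕ) < s.card), sortDown c j := by
  have hU : U * star U = 1 := mul_eq_one_comm.mp hU'
  have hV : V * star V = 1 := mul_eq_one_comm.mp hV'
  set W : Matrix (Fin n) (Fin n) ℂ := star U * V with hWdef
  have hWstar : star W = star V * U := by rw [hWdef, StarMul.star_mul, star_star]
  have hsWW : star W * W = 1 := by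
    rw [hWstar, hWdef, Matrix.mul_assoc, ← Matrix.mul_assoc U, hU, Matrix.one_mul, hV']
  have hWW : W * star W = 1 := by
    rw [hWstar, hWdef, Matrix.mul_assoc, ← Matrix.mul_assoc V, hV, Matrix.one_mul, hU']
  have hfac : star V * H * V = star W * Matrix.diagonal (fun i => (c i : ℂ)) * W := by
    rw [hH, hWstar, hWdef]
    simp only [Matrix.mul_assoc]
  have entry : ∀ i, ((star V * H * V) i i).re = ∑ j, c j * Complex.normSq (W j i) := by
    intro i
    rw [hfac, Matrix.mul_apply, Complex.re_sum]
    refine Finset.sum_congr rfl fun j _ => ?_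
    rw [Matrix.mul_diagonal, Matrix.star_apply]
    have e : star (W j i) * (c j : ℂ) * W j i
        = (c j : ℂ) * (W j i * star (W j i)) := by ring
    rw [e]
    rw [show (star (W j i) : ℂ) = (starRingEnd ℂ) (W j i) from rfl, Complex.mul_conj,
      ← Complex.ofReal_mul, Complex.ofReal_re]
  set d : Fin n → ℝ := fun j => ∑ i ∈ s, Complex.normSq (W j i) with hd
  have main : ∑ i ∈ s, ((star V * H * V) i i).re = ∑ j, c j * d j := by
    simp_rw [entry, hd, Finset.mul_sum]
    rw [Finset.sum_comm]
  have rowsum : ∀ j, ∑ i, Complex.normSq (W j i) = 1 := by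
    intro j
    have h1 : ((W * star W) j j).re = ∑ i, Complex.normSq (W j i) := by
      rw [Matrix.mul_apply, Complex.re_sum]
      refine Finset.sum_congr rfl fun i _ => ?_
      rw [Matrix.star_apply,
        show (star (W j i) : ℂ) = (starRingEnd ℂ) (W j i) from rfl, Complex.mul_conj,
        Complex.ofReal_re]
    rw [← h1, hWW, Matrix.one_apply_eq, Complex.one_re]
  have colsum : ∀ i, ∑ j, Complex.normSq (W j i) = 1 := by
    intro i
    have h1 : ((star W * W) i i).re = ∑ j, Complex.normSq (W j i) := by
      rw [Matrix.mul_apply, Complex.re_sum]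
      refine Finset.sum_congr rfl fun j _ => ?_
      rw [Matrix.star_apply,
        show (star (W j i) : ℂ) = (starRingEnd ℂ) (W j i) from rfl]
      rw [show (starRingEnd ℂ) (W j i) * W j i = W j i * (starRingEnd ℂ) (W j i) from by ring,
        Complex.mul_conj, Complex.ofReal_re]
    rw [← h1, hsWW, Matrix.one_apply_eq, Complex.one_re]
  have hd0 : ∀ j, 0 ≤ d j := fun j => Finset.sum_nonneg fun i _ => Complex.normSq_nonneg _
  have hd1 : ∀ j, d j ≤ 1 := by
    intro j
    calc d j ≤ ∑ i, Complex.normSq (W j i) :=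
          Finset.sum_le_sum_of_subset_of_nonneg (Finset.subset_univ s)
            (fun i _ _ => Complex.normSq_nonneg _)
      _ = 1 := rowsum j
  have hdsum : ∑ j, d j = (s.card : ℝ) := by
    rw [hd]
    rw [Finset.sum_comm]
    rw [Finset.sum_congr rfl fun i _ => colsum i, Finset.sum_const, nsmul_eq_mul, mul_one]
  have hcard : s.card ≤ n := le_trans (Finset.card_le_univ s) (by simp)
  rw [main]
  exact abstract_bound hcard c d hd0 hd1 hdsum
lemma herm_of_decomp {n : ℕ} {H U : Matrix (Fin n) (Fin n) ℂ} {c : Fin n → ℝ}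
    (hH : H = U * Matrix.diagonal (fun i => (c i : ℂ)) * star U) :
    H.IsHermitian := by
  rw [hH, Matrix.star_eq_conjTranspose]
  exact Matrix.isHermitian_mul_mul_conjTranspose U
    (Matrix.isHermitian_diagonal_iff.mpr fun i =>
      isSelfAdjoint_iff.mpr (by rw [Complex.star_def, Complex.conj_ofReal]))
lemma eigValsDown_eq_sortDown {n : ℕ} {H : Matrix (Fin n) (Fin n) ℂ}
    (hH : H.IsHermitian) : eigValsDown H = sortDown hH.eigenvalues := by
  funext j
  rw [eigValsDown, dif_pos hH]
  rfl

/-- sum of `sortDown c` over the top-`k` index set as a sum over an image set. -/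
lemma sum_sortDown_eq_sum_image {n k : ℕ} (c : Fin n → ℝ) :
    ∑ i ∈ Finset.image (fun j : Fin n => Tuple.sort c (Fin.rev j))
        (Finset.univ.filter fun j : Fin n => (j : ℕ) < k), c i
      = ∑ j ∈ Finset.univ.filter (fun j : Fin n => (j : ℕ) < k), sortDown c j := by
  rw [Finset.sum_image]
  · rfl
  · intro x _ y _ h
    exact Fin.rev_injective ((Tuple.sort c).injective h)
lemma card_image_sort {n k : ℕ} (hk : k ≤ n) (c : Fin n → ℝ) :
    (Finset.image (fun j : Fin n => Tuple.sort c (Fin.rev j))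
        (Finset.univ.filter fun j : Fin n => (j : ℕ) < k)).card = k := by
  rw [Finset.card_image_of_injective _
    (fun x y h => Fin.rev_injective ((Tuple.sort c).injective h)), card_filter_lt hk]
lemma half_bound {n : ℕ} {H U₁ U₂ : Matrix (Fin n) (Fin n) ℂ} {c₁ c₂ : Fin n → ℝ}
    (hU₁' : star U₁ * U₁ = 1) (hU₂' : star U₂ * U₂ = 1)
    (h1 : H = U₁ * Matrix.diagonal (fun i => (c₁ i : ℂ)) * star U₁)
    (h2 : star U₂ * H * U₂ = Matrix.diagonal (fun i => (c₂ i : ℂ)))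
    {k : ℕ} (hk : k ≤ n) :
    ∑ j ∈ Finset.univ.filter (fun j : Fin n => (j : ℕ) < k), sortDown c₂ j ≤
      ∑ j ∈ Finset.univ.filter (fun j : Fin n => (j : ℕ) < k), sortDown c₁ j := by
  set s := Finset.image (fun j : Fin n => Tuple.sort c₂ (Fin.rev j))
    (Finset.univ.filter fun j : Fin n => (j : ℕ) < k) with hs
  have hb := main_bound hU₁' hU₂' h1 s
  rw [hs, card_image_sort hk] at hb
  refine le_trans (le_of_eq ?_) hb
  rw [← sum_sortDown_eq_sum_image c₂]
  refine Finset.sum_congr rfl fun i _ => ?_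
  rw [h2, Matrix.diagonal_apply_eq, Complex.ofReal_re]
lemma star_mul_mul_of_decomp {n : ℕ} {H U : Matrix (Fin n) (Fin n) ℂ} {c : Fin n → ℝ}
    (hU' : star U * U = 1)
    (hH : H = U * Matrix.diagonal (fun i => (c i : ℂ)) * star U) :
    star U * H * U = Matrix.diagonal (fun i => (c i : ℂ)) := by
  rw [hH]
  simp only [Matrix.mul_assoc]
  rw [hU', Matrix.mul_one, ← Matrix.mul_assoc, hU', Matrix.one_mul]
lemma S_eq_aux {n : ℕ} {H U : Matrix (Fin n) (Fin n) ℂ} {c : Fin n → ℝ}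
    (hU' : star U * U = 1)
    (hH : H = U * Matrix.diagonal (fun i => (c i : ℂ)) * star U)
    {k : ℕ} (hk : k ≤ n) :
    ∑ j ∈ Finset.univ.filter (fun j : Fin n => (j : ℕ) < k), eigValsDown H j =
      ∑ j ∈ Finset.univ.filter (fun j : Fin n => (j : ℕ) < k), sortDown c j := by
  have hHerm : H.IsHermitian := herm_of_decomp hH
  set UH : Matrix (Fin n) (Fin n) ℂ := (hHerm.eigenvectorUnitary : Matrix (Fin n) (Fin n) ℂ)
    with hUHdef
  have hUH' : star UH * UH = 1 :=
    (Matrix.mem_unitaryGroup_iff').mp hHerm.eigenvectorUnitary.2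
  have hspec : H = UH * Matrix.diagonal (fun i => ((hHerm.eigenvalues i : ℝ) : ℂ)) * star UH :=
    hHerm.spectral_theorem
  have hdiagH : star UH * H * UH
      = Matrix.diagonal (fun i => ((hHerm.eigenvalues i : ℝ) : ℂ)) :=
    (by have h := hHerm.conjStarAlgAut_star_eigenvectorUnitary
        rw [Unitary.conjStarAlgAut_apply] at h; simp at h; rw [hUHdef]; exact h)
  have hdiagc : star U * H * U = Matrix.diagonal (fun i => (c i : ℂ)) :=
    star_mul_mul_of_decomp hU' hH
  have heig : ∑ j ∈ Finset.univ.filter (fun j : Fin n => (j : ℕ) < k), eigValsDown H j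
      = ∑ j ∈ Finset.univ.filter (fun j : Fin n => (j : ℕ) < k), sortDown hHerm.eigenvalues j :=
    Finset.sum_congr rfl fun j _ => by rw [eigValsDown_eq_sortDown hHerm]
  rw [heig]
  exact le_antisymm (half_bound hU' hUH' hH hdiagH hk)
    (half_bound hUH' hU' hspec hdiagc hk)
lemma S_eq {n : ℕ} {H U : Matrix (Fin n) (Fin n) ℂ} {c : Fin n → ℝ}
    (hU' : star U * U = 1)
    (hH : H = U * Matrix.diagonal (fun i => (c i : ℂ)) * star U) (k : ℕ) :
    ∑ j ∈ Finset.univ.filter (fun j : Fin n => (j : ℕ) < k), eigValsDown H j =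
      ∑ j ∈ Finset.univ.filter (fun j : Fin n => (j : ℕ) < k), sortDown c j := by
  rw [filter_lt_min n k]
  exact S_eq_aux hU' hH (min_le_right k n)
lemma kyFan {n : ℕ} {X Y : Matrix (Fin n) (Fin n) ℂ}
    (hX : X.IsHermitian) (hY : Y.IsHermitian) (k : ℕ) :
    ∑ j ∈ Finset.univ.filter (fun j : Fin n => (j : ℕ) < k), eigValsDown (X + Y) j ≤
      ∑ j ∈ Finset.univ.filter (fun j : Fin n => (j : ℕ) < k), eigValsDown X j +
      ∑ j ∈ Finset.univ.filter (fun j : Fin n => (j : ℕ) < k), eigValsDown Y j := by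
  rw [filter_lt_min n k]
  set k' := min k n with hk'def
  have hk' : k' ≤ n := min_le_right k n
  have hZ : (X + Y).IsHermitian := hX.add hY
  set UZ : Matrix (Fin n) (Fin n) ℂ := (hZ.eigenvectorUnitary : Matrix (Fin n) (Fin n) ℂ)
  have hUZ' : star UZ * UZ = 1 :=
    (Matrix.mem_unitaryGroup_iff').mp hZ.eigenvectorUnitary.2
  set lZ := hZ.eigenvalues with hlZ
  set s := Finset.image (fun j : Fin n => Tuple.sort lZ (Fin.rev j))
    (Finset.univ.filter fun j : Fin n => (j : ℕ) < k') with hs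
  have hcard : s.card = k' := card_image_sort hk' lZ
  have hZsum : ∑ j ∈ Finset.univ.filter (fun j : Fin n => (j : ℕ) < k'),
      eigValsDown (X + Y) j = ∑ i ∈ s, ((star UZ * (X + Y) * UZ) i i).re := by
    rw [show star UZ * (X + Y) * UZ = Matrix.diagonal (RCLike.ofReal ∘ lZ) from by
      have h := hZ.conjStarAlgAut_star_eigenvectorUnitary
      rw [Unitary.conjStarAlgAut_apply] at h; simpa using h]
    have h1 : ∀ i ∈ s, ((Matrix.diagonal (RCLike.ofReal ∘ lZ) : Matrix (Fin n) (Fin n) ℂ) i i).re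
        = lZ i := fun i _ => by
      rw [Matrix.diagonal_apply_eq]
      exact Complex.ofReal_re _
    rw [Finset.sum_congr rfl h1, hs, Finset.sum_image
      (fun x _ y _ h => Fin.rev_injective ((Tuple.sort lZ).injective h))]
    refine Finset.sum_congr rfl fun j _ => ?_
    rw [eigValsDown_eq_sortDown hZ]
    rfl
  have split : ∀ i, ((star UZ * (X + Y) * UZ) i i).re
      = ((star UZ * X * UZ) i i).re + ((star UZ * Y * UZ) i i).re := by
    intro i
    rw [Matrix.mul_add, Matrix.add_mul, Matrix.add_apply, Complex.add_re]
  have bX : ∑ i ∈ s, ((star UZ * X * UZ) i i).re ≤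
      ∑ j ∈ Finset.univ.filter (fun j : Fin n => (j : ℕ) < k'), eigValsDown X j := by
    have hUX' : star (hX.eigenvectorUnitary : Matrix (Fin n) (Fin n) ℂ) *
        (hX.eigenvectorUnitary : Matrix (Fin n) (Fin n) ℂ) = 1 :=
      (Matrix.mem_unitaryGroup_iff').mp hX.eigenvectorUnitary.2
    have hb := main_bound hUX' hUZ' hX.spectral_theorem s
    rw [hcard] at hb
    refine le_trans hb (le_of_eq ?_)
    have he : (fun i => (algebraMap ℝ ℝ) (hX.eigenvalues i)) = hX.eigenvalues :=
      funext fun i => by simp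
    rw [he]
    exact (Finset.sum_congr rfl fun j _ => by rw [eigValsDown_eq_sortDown hX]).symm
  have bY : ∑ i ∈ s, ((star UZ * Y * UZ) i i).re ≤
      ∑ j ∈ Finset.univ.filter (fun j : Fin n => (j : ℕ) < k'), eigValsDown Y j := by
    have hUY' : star (hY.eigenvectorUnitary : Matrix (Fin n) (Fin n) ℂ) *
        (hY.eigenvectorUnitary : Matrix (Fin n) (Fin n) ℂ) = 1 :=
      (Matrix.mem_unitaryGroup_iff').mp hY.eigenvectorUnitary.2
    have hb := main_bound hUY' hUZ' hY.spectral_theorem s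
    rw [hcard] at hb
    refine le_trans hb (le_of_eq ?_)
    have he : (fun i => (algebraMap ℝ ℝ) (hY.eigenvalues i)) = hY.eigenvalues :=
      funext fun i => by simp
    rw [he]
    exact (Finset.sum_congr rfl fun j _ => by rw [eigValsDown_eq_sortDown hY]).symm
  rw [hZsum]
  calc ∑ i ∈ s, ((star UZ * (X + Y) * UZ) i i).re
      = ∑ i ∈ s, (((star UZ * X * UZ) i i).re + ((star UZ * Y * UZ) i i).re) :=
        Finset.sum_congr rfl fun i _ => split i
    _ = (∑ i ∈ s, ((star UZ * X * UZ) i i).re) + ∑ i ∈ s, ((star UZ * Y * UZ) i i).re :=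
        Finset.sum_add_distrib
    _ ≤ _ := add_le_add bX bY
lemma matFun_eq {n : ℕ} {G : Matrix (Fin n) (Fin n) ℂ} (hG : G.IsHermitian) (f : ℝ → ℝ) :
    matFun f G = (hG.eigenvectorUnitary : Matrix (Fin n) (Fin n) ℂ) *
      Matrix.diagonal (fun i => ((f (hG.eigenvalues i) : ℝ) : ℂ)) *
      star (hG.eigenvectorUnitary : Matrix (Fin n) (Fin n) ℂ) := by
  rw [matFun, dif_pos hG]
  rfl
lemma smul_decomp {n : ℕ} {G : Matrix (Fin n) (Fin n) ℂ} (hG : G.IsHermitian)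
    (f : ℝ → ℝ) (t : ℝ) :
    t • matFun f G = (hG.eigenvectorUnitary : Matrix (Fin n) (Fin n) ℂ) *
      Matrix.diagonal (fun i => ((t * f (hG.eigenvalues i) : ℝ) : ℂ)) *
      star (hG.eigenvectorUnitary : Matrix (Fin n) (Fin n) ℂ) := by
  rw [matFun_eq hG f, ← smul_mul_assoc, ← mul_smul_comm]
  have hdiag : t • Matrix.diagonal (fun i => ((f (hG.eigenvalues i) : ℝ) : ℂ))
      = Matrix.diagonal (fun i => ((t * f (hG.eigenvalues i) : ℝ) : ℂ)) := by
    ext i j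
    by_cases h : i = j
    · subst h
      simp [Matrix.diagonal_apply_eq, Complex.real_smul]
    · simp [Matrix.diagonal_apply_ne _ h, h]
  rw [hdiag]
lemma smul_add_decomp {n : ℕ} {G : Matrix (Fin n) (Fin n) ℂ} (hG : G.IsHermitian)
    (f₁ f₂ : ℝ → ℝ) (t : ℝ) :
    t • matFun f₁ G + matFun f₂ G =
      (hG.eigenvectorUnitary : Matrix (Fin n) (Fin n) ℂ) *
      Matrix.diagonal
        (fun i => ((t * f₁ (hG.eigenvalues i) + f₂ (hG.eigenvalues i) : ℝ) : ℂ)) *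
      star (hG.eigenvectorUnitary : Matrix (Fin n) (Fin n) ℂ) := by
  rw [smul_decomp hG f₁ t, matFun_eq hG f₂, ← Matrix.add_mul, ← Matrix.mul_add,
    Matrix.diagonal_add]
  have hdiag : (fun i => (((t * f₁ (hG.eigenvalues i) : ℝ) : ℂ) + ((f₂ (hG.eigenvalues i) : ℝ) : ℂ)))
      = fun i => ((t * f₁ (hG.eigenvalues i) + f₂ (hG.eigenvalues i) : ℝ) : ℂ) := by
    funext i
    push_cast
    ring
  rw [hdiag]

/-- if the partial eigenvalue-sum inequality between `aA + B` and `aA + C`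
(with `A = f₁(G)`, `B = f₂(G)`, `f₁, f₂` monotone) holds for some `a ≥ 0`, then it holds
for every `b` with `0 ≤ b ≤ a`. -/
theorem stmt6 {n : ℕ} (G C : Matrix (Fin n) (Fin n) ℂ)
    (hG : G.IsHermitian) (hC : C.IsHermitian)
    (f₁ f₂ : ℝ → ℝ) (hf₁ : Monotone f₁) (hf₂ : Monotone f₂)
    (A B : Matrix (Fin n) (Fin n) ℂ)
    (hA : A = matFun f₁ G) (hB : B = matFun f₂ G)
    (k : ℕ) (a : ℝ) (ha : 0 ≤ a)
    (hineq : ∑ j ∈ Finset.univ.filter (fun j : Fin n => (j : ℕ) < k),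
          eigValsDown (a • A + B) j ≤
        ∑ j ∈ Finset.univ.filter (fun j : Fin n => (j : ℕ) < k),
          eigValsDown (a • A + C) j)
    (b : ℝ) (hb0 : 0 ≤ b) (hba : b ≤ a) :
    ∑ j ∈ Finset.univ.filter (fun j : Fin n => (j : ℕ) < k),
        eigValsDown (b • A + B) j ≤
      ∑ j ∈ Finset.univ.filter (fun j : Fin n => (j : ℕ) < k),
        eigValsDown (b • A + C) j := by
  set U : Matrix (Fin n) (Fin n) ℂ := (hG.eigenvectorUnitary : Matrix (Fin n) (Fin n) ℂ)
    with hUdef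
  have hU' : star U * U = 1 :=
    (Matrix.mem_unitaryGroup_iff').mp hG.eigenvectorUnitary.2
  set lam := hG.eigenvalues with hlam
  set mu := sortDown lam with hmu
  -- sums of eigenvalues for t•A + B
  have evalAB : ∀ t : ℝ, 0 ≤ t →
      ∑ j ∈ Finset.univ.filter (fun j : Fin n => (j : ℕ) < k), eigValsDown (t • A + B) j
        = ∑ j ∈ Finset.univ.filter (fun j : Fin n => (j : ℕ) < k),
            (t * f₁ (mu j) + f₂ (mu j)) := by
    intro t ht
    have hdec : t • A + B = U * Matrix.diagonal
        (fun i => (((fun x => t * f₁ x + f₂ x) ∘ lam) i : ℂ)) * star U := by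
      rw [hA, hB]; exact smul_add_decomp hG f₁ f₂ t
    rw [S_eq hU' hdec k]
    refine Finset.sum_congr rfl fun j _ => ?_
    have hgmono : Monotone (fun x => t * f₁ x + f₂ x) := fun x y hxy =>
      add_le_add (mul_le_mul_of_nonneg_left (hf₁ hxy) ht) (hf₂ hxy)
    exact congrFun (sortDown_comp_mono lam hgmono) j
  have evalA : ∀ t : ℝ, 0 ≤ t →
      ∑ j ∈ Finset.univ.filter (fun j : Fin n => (j : ℕ) < k), eigValsDown (t • A) j
        = ∑ j ∈ Finset.univ.filter (fun j : Fin n => (j : ℕ) < k), t * f₁ (mu j) := by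
    intro t ht
    have hdec : t • A = U * Matrix.diagonal
        (fun i => (((fun x => t * f₁ x) ∘ lam) i : ℂ)) * star U := by
      rw [hA]; exact smul_decomp hG f₁ t
    rw [S_eq hU' hdec k]
    refine Finset.sum_congr rfl fun j _ => ?_
    have hgmono : Monotone (fun x => t * f₁ x) := fun x y hxy =>
      mul_le_mul_of_nonneg_left (hf₁ hxy) ht
    exact congrFun (sortDown_comp_mono lam hgmono) j
  -- Hermitian facts
  have hAherm : A.IsHermitian := by
    rw [hA, matFun_eq hG f₁]
    exact herm_of_decomp rfl
  have hXherm : ((a - b) • A).IsHermitian :=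
    herm_of_decomp (by rw [hA]; exact smul_decomp hG f₁ (a - b))
  have hYBherm : (b • A + C).IsHermitian := by
    have h1 : (b • A).IsHermitian := herm_of_decomp (by rw [hA]; exact smul_decomp hG f₁ b)
    exact h1.add hC
  -- Ky Fan
  have hmat : (a - b) • A + (b • A + C) = a • A + C := by
    rw [← add_assoc, ← add_smul, sub_add_cancel]
  have hky := kyFan hXherm hYBherm k
  rw [hmat] at hky
  -- combine
  have e1 := evalAB a ha
  have e2 := evalAB b hb0
  have e3 := evalA (a - b) (by linarith)
  have e4 : ∑ j ∈ Finset.univ.filter (fun j : Fin n => (j : ℕ) < k),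
        (a * f₁ (mu j) + f₂ (mu j))
      - ∑ j ∈ Finset.univ.filter (fun j : Fin n => (j : ℕ) < k), (a - b) * f₁ (mu j)
      = ∑ j ∈ Finset.univ.filter (fun j : Fin n => (j : ℕ) < k),
        (b * f₁ (mu j) + f₂ (mu j)) := by
    rw [← Finset.sum_sub_distrib]
    exact Finset.sum_congr rfl fun j _ => by ring
  rw [e2]
  rw [e1] at hineq
  rw [e3] at hky
  linarith
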